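/- Let n = 2m+2 and let S and C be n×n real circulant matrices with eigenvalue lists σ₁ = (λ₁, λ₂, …, λ̄₂) and σ₂ = (β₁, β₂, …, β̄₂) (in Fourier ordering), such that S, S+C, and S−C are nonnegative. Let t₁ ≥ |t₂|. Then there exist nonnegative circulant matrices realizing the Guo-perturbed lists σ_{s,t₁} = (λ₁+t₁, λ₂, …, λ_{m+1}, λ_{m+2}±t₁, λ̄_{m+1}, …, λ̄₂) and σ_{c,t₂} = (β₁+t₂, β₂, …, β_{m+1}, β_{m+2}±t₂, β̄_{m+1}, …, β̄₂), and moreover the matrices S̃+C̃ and S̃−C̃ built from these perturbed lists via the inverse discrete Fourier transform are nonnegative, so the 2n×2n block construction yields a nonnegative permutative matrix with eigenvalue multiset σ_{s,t₁} ∪ σ_{c,t₂}. -/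

import Mathlib

open Matrix Polynomial Complex

namespace Stmt18

/-- First row recovered from an eigenvalue list by the inverse DFT: r = (1/n)·F̄·σ. -/
noncomputable def idftRow (n : ℕ) (σ : Fin n → ℂ) : Fin n → ℂ :=
  fun j => (1 / (n : ℂ)) * ∑ k : Fin n,
    (starRingEnd ℂ) (Complex.exp (2 * Real.pi * Complex.I / n) ^ ((k : ℕ) * (j : ℕ))) * σ k

/-- Circulant matrix with first row r. -/
def circ {n : ℕ} (r : Fin n → ℂ) : Matrix (Fin n) (Fin n) ℂ :=
  Matrix.of fun i j => r (j - i)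

/-- A complex number which is real and nonnegative. -/
def NN (z : ℂ) : Prop := z.im = 0 ∧ 0 ≤ z.re

end Stmt18

open Stmt18

namespace Stmt18Aux

noncomputable def om (n : ℕ) : ℂ := Complex.exp (2 * Real.pi * Complex.I / n)

variable {n : ℕ}

lemma om_pow (a : ℕ) : om n ^ a = Complex.exp (a * (2 * Real.pi * Complex.I / n)) := by
  rw [om, Complex.exp_nat_mul]

lemma om_pow_n (hn : n ≠ 0) : om n ^ n = 1 := by
  rw [om_pow]
  have hn' : (n : ℂ) ≠ 0 := Nat.cast_ne_zero.mpr hn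
  have : (n : ℂ) * (2 * Real.pi * Complex.I / n) = 2 * Real.pi * Complex.I := by
    field_simp
  rw [this, Complex.exp_two_pi_mul_I]

lemma om_pow_mod (hn : n ≠ 0) (a : ℕ) : om n ^ a = om n ^ (a % n) := by
  conv_lhs => rw [← Nat.mod_add_div a n]
  rw [pow_add, pow_mul, om_pow_n hn, one_pow, mul_one]

lemma om_pow_congr (hn : n ≠ 0) {a b : ℕ} (h : a % n = b % n) : om n ^ a = om n ^ b := by
  rw [om_pow_mod hn a, om_pow_mod hn b, h]

lemma om_pow_eq_one_iff (hn : n ≠ 0) (a : ℕ) : om n ^ a = 1 ↔ n ∣ a := by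
  constructor
  · intro h
    rw [om_pow, Complex.exp_eq_one_iff] at h
    obtain ⟨k, hk⟩ := h
    have hn' : (n : ℂ) ≠ 0 := Nat.cast_ne_zero.mpr hn
    have h2 : ((a : ℂ)) = k * n := by
      field_simp at hk
      have h4 : (a : ℂ) * (2 * Real.pi * Complex.I) = (k * n) * (2 * Real.pi * Complex.I) := by
        linear_combination (2 * Real.pi * Complex.I) * hk
      exact mul_right_cancel₀ Complex.two_pi_I_ne_zero h4
    have h3 : (a : ℤ) = k * n := by exact_mod_cast h2
    exact Int.natCast_dvd_natCast.mp ⟨k, by rw [h3]; ring⟩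
  · rintro ⟨c, rfl⟩
    rw [pow_mul, om_pow_n hn, one_pow]

lemma conj_om_pow (hn : n ≠ 0) (a : ℕ) :
    (starRingEnd ℂ) (om n ^ a) = om n ^ ((n - 1) * a) := by
  have h1 : (starRingEnd ℂ) (om n) = (om n)⁻¹ := by
    rw [om, ← Complex.exp_conj, ← Complex.exp_neg]
    congr 1
    rw [map_div₀]
    rw [show (starRingEnd ℂ) (2 * Real.pi * Complex.I) = -(2 * Real.pi * Complex.I) by
      rw [_root_.map_mul, _root_.map_mul, Complex.conj_I, Complex.conj_ofReal,
        map_ofNat]; ring]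
    rw [Complex.conj_natCast, neg_div]
  have h2 : (om n)⁻¹ = om n ^ (n - 1) := by
    have h3 : om n ^ (n - 1) * om n = 1 := by
      rw [← pow_succ, Nat.sub_add_cancel (Nat.one_le_iff_ne_zero.mpr hn), om_pow_n hn]
    exact (eq_inv_of_mul_eq_one_left h3).symm
  rw [map_pow, h1, h2, ← pow_mul]

lemma ortho (hn : n ≠ 0) (k l : Fin n) :
    ∑ d : Fin n, (starRingEnd ℂ) (om n ^ ((l : ℕ) * (d : ℕ))) * om n ^ ((d : ℕ) * (k : ℕ)) =
      if k = l then (n : ℂ) else 0 := by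
  have key : ∀ d : Fin n, (starRingEnd ℂ) (om n ^ ((l : ℕ) * (d : ℕ))) * om n ^ ((d : ℕ) * (k : ℕ))
      = (om n ^ ((n - 1) * (l : ℕ) + (k : ℕ))) ^ (d : ℕ) := by
    intro d
    rw [conj_om_pow hn, ← pow_add, ← pow_mul]
    congr 1
    ring
  simp only [key]
  rw [Fin.sum_univ_eq_sum_range (fun d => (om n ^ ((n - 1) * (l : ℕ) + (k : ℕ))) ^ d) n]
  have hdvd : n ∣ (n - 1) * (l : ℕ) + (k : ℕ) ↔ k = l := by
    have h1 : (((n - 1) * (l : ℕ) + (k : ℕ) : ℕ) : ℤ) = n * l + ((k : ℤ) - l) := by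
      have : 1 ≤ n := Nat.one_le_iff_ne_zero.mpr hn
      push_cast [this]
      ring
    rw [← Int.natCast_dvd_natCast, h1]
    rw [Int.dvd_add_right ⟨(l : ℤ), rfl⟩]
    constructor
    · intro h
      have hk := k.isLt; have hl := l.isLt
      have := Int.eq_zero_of_abs_lt_dvd h (by
        rw [abs_lt]; constructor <;> [skip; skip] <;> omega)
      have : (k : ℕ) = (l : ℕ) := by omega
      exact Fin.ext this
    · rintro rfl; simp
  by_cases hkl : k = l
  · subst hkl
    have h1 : om n ^ ((n - 1) * (k : ℕ) + (k : ℕ)) = 1 := by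
      rw [om_pow_eq_one_iff hn]
      exact hdvd.mpr rfl
    simp [h1]
  · have h1 : om n ^ ((n - 1) * (l : ℕ) + (k : ℕ)) ≠ 1 := by
      rw [Ne, om_pow_eq_one_iff hn, hdvd]
      exact hkl
    rw [geom_sum_eq h1, if_neg hkl]
    have h2 : (om n ^ ((n - 1) * (l : ℕ) + (k : ℕ))) ^ n = 1 := by
      rw [← pow_mul, mul_comm, pow_mul, om_pow_n hn, one_pow]
    rw [h2, sub_self, zero_div]

lemma dft_inv (hn : n ≠ 0) (σ : Fin n → ℂ) (k : Fin n) :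
    ∑ j : Fin n, idftRow n σ j * om n ^ ((j : ℕ) * (k : ℕ)) = σ k := by
  have hn' : (n : ℂ) ≠ 0 := Nat.cast_ne_zero.mpr hn
  unfold idftRow
  simp only [Finset.sum_mul, Finset.mul_sum]
  rw [Finset.sum_comm]
  have key : ∀ l : Fin n, ∑ j : Fin n,
      1 / (n : ℂ) * ((starRingEnd ℂ) (Complex.exp (2 * Real.pi * Complex.I / n) ^ ((l : ℕ) * (j : ℕ))) * σ l)
        * om n ^ ((j : ℕ) * (k : ℕ))
      = (if k = l then (n : ℂ) else 0) * (1 / n * σ l) := by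
    intro l
    rw [← ortho hn k l, Finset.sum_mul]
    apply Finset.sum_congr rfl
    intro j _
    show 1 / (n : ℂ) * ((starRingEnd ℂ) (om n ^ ((l : ℕ) * (j : ℕ))) * σ l) * om n ^ ((j : ℕ) * (k : ℕ)) = _
    ring
  rw [Finset.sum_congr rfl (fun l _ => key l)]
  simp only [ite_mul, zero_mul]
  rw [Finset.sum_ite_eq]
  simp only [Finset.mem_univ, if_pos]
  field_simp

noncomputable def Fm (n : ℕ) : Matrix (Fin n) (Fin n) ℂ :=
  Matrix.of fun j k => om n ^ ((j : ℕ) * (k : ℕ))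

lemma circ_mul_F [NeZero n] (σ : Fin n → ℂ) :
    circ (idftRow n σ) * Fm n = Fm n * Matrix.diagonal σ := by
  have hn : n ≠ 0 := NeZero.ne n
  ext i k
  rw [Matrix.mul_diagonal, Matrix.mul_apply]
  show ∑ j : Fin n, idftRow n σ (j - i) * om n ^ ((j : ℕ) * (k : ℕ))
    = om n ^ ((i : ℕ) * (k : ℕ)) * σ k
  rw [← Equiv.sum_comp (Equiv.addLeft i)
    (fun j => idftRow n σ (j - i) * om n ^ ((j : ℕ) * (k : ℕ)))]
  have key : ∀ d : Fin n, idftRow n σ ((Equiv.addLeft i) d - i) *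
      om n ^ ((((Equiv.addLeft i) d : Fin n) : ℕ) * (k : ℕ))
      = om n ^ ((i : ℕ) * (k : ℕ)) * (idftRow n σ d * om n ^ ((d : ℕ) * (k : ℕ))) := by
    intro d
    have h1 : (Equiv.addLeft i) d - i = d := by
      simp [Equiv.addLeft]
    have h2 : om n ^ ((((Equiv.addLeft i) d : Fin n) : ℕ) * (k : ℕ))
        = om n ^ ((i : ℕ) * (k : ℕ)) * om n ^ ((d : ℕ) * (k : ℕ)) := by
      rw [← pow_add]
      apply om_pow_congr hn
      have h3 : (((Equiv.addLeft i) d : Fin n) : ℕ) = ((i : ℕ) + (d : ℕ)) % n := by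
        simp [Equiv.addLeft, Fin.add_def]
      rw [h3]
      have h4 : ((i : ℕ) + (d : ℕ)) % n * (k : ℕ) ≡ ((i : ℕ) + (d : ℕ)) * (k : ℕ) [MOD n] :=
        (Nat.mod_modEq _ n).mul_right _
      calc ((i : ℕ) + (d : ℕ)) % n * (k : ℕ) % n
          = ((i : ℕ) + (d : ℕ)) * (k : ℕ) % n := h4
        _ = ((i : ℕ) * (k : ℕ) + (d : ℕ) * (k : ℕ)) % n := by ring_nf
    rw [h1, h2]
    ring
  rw [Finset.sum_congr rfl (fun d _ => key d), ← Finset.mul_sum, dft_inv hn σ k]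

lemma det_F_ne (hn : n ≠ 0) : (Fm n).det ≠ 0 := by
  have hF : Fm n = Matrix.vandermonde (fun j : Fin n => om n ^ (j : ℕ)) := by
    ext j k
    rw [Matrix.vandermonde]
    show om n ^ ((j : ℕ) * (k : ℕ)) = (om n ^ (j : ℕ)) ^ (k : ℕ)
    rw [← pow_mul]
  rw [hF]
  rw [Matrix.det_vandermonde_ne_zero_iff]
  have key : ∀ a b : Fin n, (a : ℕ) ≤ (b : ℕ) → om n ^ (a : ℕ) = om n ^ (b : ℕ) → a = b := by
    intro a b h hab
    have hom : om n ≠ 0 := by rw [om]; exact Complex.exp_ne_zero _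
    have h1 : om n ^ ((b : ℕ) - (a : ℕ)) = 1 := by
      have h2 : om n ^ (a : ℕ) * om n ^ ((b : ℕ) - (a : ℕ)) = om n ^ (a : ℕ) * 1 := by
        rw [mul_one, ← pow_add]
        rw [show (a : ℕ) + ((b : ℕ) - (a : ℕ)) = (b : ℕ) by omega]
        exact hab.symm
      exact mul_left_cancel₀ (pow_ne_zero _ hom) h2
    rw [om_pow_eq_one_iff hn] at h1
    have hb := b.isLt
    rcases Nat.eq_zero_or_pos ((b : ℕ) - (a : ℕ)) with h0 | h0
    · exact Fin.ext (by omega)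
    · have := Nat.le_of_dvd h0 h1
      omega
  intro a b hab
  simp only at hab
  rcases le_total (a : ℕ) (b : ℕ) with h | h
  · exact key a b h hab
  · exact (key b a h hab.symm).symm

lemma charpoly_similar {N : Type*} [Fintype N] [DecidableEq N] (A B P : Matrix N N ℂ)
    (hP : P.det ≠ 0) (h : A * P = P * B) : A.charpoly = B.charpoly := by
  have h1 : Matrix.charmatrix A * P.map Polynomial.C = P.map Polynomial.C * Matrix.charmatrix B := by
    rw [Matrix.charmatrix, Matrix.charmatrix, sub_mul, mul_sub]
    congr 1
    · exact (Matrix.scalar_commute Polynomial.X (fun r => Commute.all _ _) (P.map Polynomial.C)).eq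
    · simp only [RingHom.mapMatrix_apply]
      rw [← Matrix.map_mul, ← Matrix.map_mul, h]
  have h2 := congrArg Matrix.det h1
  rw [Matrix.det_mul, Matrix.det_mul] at h2
  have h3 : (P.map Polynomial.C).det = Polynomial.C P.det := by
    rw [← RingHom.mapMatrix_apply, ← RingHom.map_det]
  rw [h3] at h2
  have h4 : (Polynomial.C P.det : Polynomial ℂ) ≠ 0 := by
    simpa using hP
  unfold Matrix.charpoly
  rw [mul_comm] at h2
  exact mul_left_cancel₀ h4 h2

lemma charpoly_diagonal {N : Type*} [Fintype N] [DecidableEq N] (d : N → ℂ) :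
    (Matrix.diagonal d).charpoly = ∏ i : N, (Polynomial.X - Polynomial.C (d i)) := by
  unfold Matrix.charpoly
  have h : Matrix.charmatrix (Matrix.diagonal d)
      = Matrix.diagonal (fun i => Polynomial.X - Polynomial.C (d i)) := by
    refine Matrix.ext fun i j => ?_
    by_cases hij : i = j
    · subst hij
      rw [Matrix.charmatrix_apply_eq, Matrix.diagonal_apply_eq]
      simp
    · rw [Matrix.charmatrix_apply_ne _ _ _ hij, Matrix.diagonal_apply_ne _ hij,
        Matrix.diagonal_apply_ne _ hij, map_zero, neg_zero]
  rw [h, Matrix.det_diagonal]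

lemma roots_prod {N : Type*} [Fintype N] (d : N → ℂ) :
    (∏ i : N, (Polynomial.X - Polynomial.C (d i))).roots = Finset.univ.val.map d := by
  have h : ∏ i : N, (Polynomial.X - Polynomial.C (d i))
      = ((Finset.univ.val.map d).map fun a => Polynomial.X - Polynomial.C a).prod := by
    rw [Multiset.map_map, Finset.prod_eq_multiset_prod]
    rfl
  rw [h, Polynomial.roots_multiset_prod_X_sub_C]

lemma idftRow_eq (n : ℕ) (σ : Fin n → ℂ) (j : Fin n) :
    idftRow n σ j = (1 / (n : ℂ)) * ∑ k : Fin n,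
      (starRingEnd ℂ) (om n ^ ((k : ℕ) * (j : ℕ))) * σ k := rfl

lemma om_half (m : ℕ) : om (2 * m + 2) ^ (m + 1) = -1 := by
  rw [om_pow]
  have h3 : ((m : ℂ) + 1) ≠ 0 := by
    have := Nat.cast_add_one_ne_zero (R := ℂ) m
    exact_mod_cast this
  have h : ((m + 1 : ℕ) : ℂ) * (2 * Real.pi * Complex.I / ((2 * m + 2 : ℕ) : ℂ))
      = Real.pi * Complex.I := by
    have h2 : ((2 * m + 2 : ℕ) : ℂ) = 2 * ((m : ℂ) + 1) := by push_cast; ring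
    rw [h2]
    push_cast
    field_simp
  rw [h, Complex.exp_pi_mul_I]

lemma idft_perturb (m : ℕ) (τ ε : ℝ) (σ' σ'' : Fin (2 * m + 2) → ℂ)
    (h : ∀ k, σ'' k = σ' k + (if (k : ℕ) = 0 then (τ : ℂ) else 0)
      + (if (k : ℕ) = m + 1 then ((ε * τ : ℝ) : ℂ) else 0))
    (j : Fin (2 * m + 2)) :
    idftRow (2 * m + 2) σ'' j = idftRow (2 * m + 2) σ' j
      + ((τ * (1 + ε * (-1 : ℝ) ^ (j : ℕ)) / (2 * m + 2) : ℝ) : ℂ) := by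
  have hn0 : 2 * m + 2 ≠ 0 := by omega
  haveI : NeZero (2 * m + 2) := ⟨hn0⟩
  rw [idftRow_eq, idftRow_eq]
  simp only [h, mul_add, Finset.sum_add_distrib]
  have hS1 : ∑ k : Fin (2 * m + 2), (starRingEnd ℂ) (om (2 * m + 2) ^ ((k : ℕ) * (j : ℕ)))
      * (if (k : ℕ) = 0 then (τ : ℂ) else 0) = (τ : ℂ) := by
    rw [Finset.sum_eq_single (0 : Fin (2 * m + 2))]
    · simp
    · intro b _ hb
      rw [if_neg, mul_zero]
      exact fun h0 => hb (Fin.ext (h0.trans (Fin.val_zero _).symm))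
    · simp
  have hS2 : ∑ k : Fin (2 * m + 2), (starRingEnd ℂ) (om (2 * m + 2) ^ ((k : ℕ) * (j : ℕ)))
      * (if (k : ℕ) = m + 1 then ((ε * τ : ℝ) : ℂ) else 0)
      = (-1 : ℂ) ^ (j : ℕ) * ((ε * τ : ℝ) : ℂ) := by
    rw [Finset.sum_eq_single (⟨m + 1, by omega⟩ : Fin (2 * m + 2))]
    · rw [if_pos rfl]
      congr 1
      show (starRingEnd ℂ) (om (2 * m + 2) ^ ((m + 1) * (j : ℕ))) = _
      rw [pow_mul, om_half, map_pow, map_neg, _root_.map_one]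
    · intro b _ hb
      rw [if_neg, mul_zero]
      simpa [Fin.ext_iff] using hb
    · simp
  rw [hS1, hS2]
  push_cast
  ring

lemma NN_add_real {z : ℂ} {r : ℝ} (hz : NN z) (hr : 0 ≤ r) : NN (z + r) :=
  ⟨by rw [Complex.add_im, Complex.ofReal_im, hz.1, add_zero],
   by rw [Complex.add_re, Complex.ofReal_re]; exact add_nonneg hz.2 hr⟩

lemma NN_half {z : ℂ} (hz : NN z) : NN (z / 2) := by
  have h : z / 2 = z * ((1 / 2 : ℝ) : ℂ) := by push_cast; ring
  rw [h]
  constructor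
  · rw [Complex.mul_im, Complex.ofReal_re, Complex.ofReal_im, hz.1]; ring
  · rw [Complex.mul_re, Complex.ofReal_re, Complex.ofReal_im, hz.1]
    have := hz.2; norm_num; linarith

end Stmt18Aux

open Stmt18Aux Kronecker Polynomial in
/-- Guo perturbations of the spectra of real nonnegative circulant
matrices S and C (with S, S+C, S−C nonnegative), with t₁ ≥ |t₂|, yield nonnegative
circulant matrices S̃, S̃+C̃, S̃−C̃ and a nonnegative permutative 2n×2n block matrix M
realizing σ_{s,t₁} ∪ σ_{c,t₂}. Here n = 2m+2, lists are in Fourier ordering (0-indexed: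
position 0 gets +t, position m+1 gets ±t with a common sign ε). -/
theorem stmt18 (m : ℕ) (σ₁ σ₂ : Fin (2 * m + 2) → ℂ)
    (hσ₁ : ∀ k, σ₁ (-k) = (starRingEnd ℂ) (σ₁ k))
    (hσ₂ : ∀ k, σ₂ (-k) = (starRingEnd ℂ) (σ₂ k))
    (hS : ∀ j, NN (idftRow _ σ₁ j))
    (hSpC : ∀ j, NN (idftRow _ σ₁ j + idftRow _ σ₂ j))
    (hSmC : ∀ j, NN (idftRow _ σ₁ j - idftRow _ σ₂ j))
    (t₁ t₂ : ℝ) (ht : |t₂| ≤ t₁)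
    (ε : ℝ) (hε : ε = 1 ∨ ε = -1)
    (σs σc : Fin (2 * m + 2) → ℂ)
    (hσs : ∀ k, σs k = σ₁ k + (if (k : ℕ) = 0 then (t₁ : ℂ) else 0)
      + (if (k : ℕ) = m + 1 then ((ε * t₁ : ℝ) : ℂ) else 0))
    (hσc : ∀ k, σc k = σ₂ k + (if (k : ℕ) = 0 then (t₂ : ℂ) else 0)
      + (if (k : ℕ) = m + 1 then ((ε * t₂ : ℝ) : ℂ) else 0))
    (M : Matrix (Fin (2 * m + 2) × Fin 2) (Fin (2 * m + 2) × Fin 2) ℂ)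
    (hM : ∀ (i j : Fin (2 * m + 2)) (p q : Fin 2), M (i, p) (j, q) =
      if p = q then (circ (idftRow _ σs) i j + circ (idftRow _ σc) i j) / 2
      else (circ (idftRow _ σs) i j - circ (idftRow _ σc) i j) / 2) :
    (∀ j, NN (idftRow _ σs j)) ∧
    (∀ j, NN (idftRow _ σs j + idftRow _ σc j)) ∧
    (∀ j, NN (idftRow _ σs j - idftRow _ σc j)) ∧
    (circ (idftRow _ σs)).charpoly.roots = Finset.univ.val.map σs ∧
    (circ (idftRow _ σc)).charpoly.roots = Finset.univ.val.map σc ∧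
    (∀ u v, NN (M u v)) ∧
    (∀ u : Fin (2 * m + 2) × Fin 2, ∃ π : Equiv.Perm (Fin (2 * m + 2) × Fin 2),
      ∀ v, M u v = M (⟨0, by omega⟩, 0) (π v)) ∧
    M.charpoly.roots = Finset.univ.val.map σs + Finset.univ.val.map σc := by
  have hn0 : 2 * m + 2 ≠ 0 := by omega
  haveI : NeZero (2 * m + 2) := ⟨hn0⟩
  have habs := abs_le.mp ht
  have ht1 : 0 ≤ t₁ := le_trans (abs_nonneg t₂) ht
  have ht12 : 0 ≤ t₁ + t₂ := by linarith [habs.1]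
  have ht12' : 0 ≤ t₁ - t₂ := by linarith [habs.2]
  have hcnn : ∀ (τ : ℝ), 0 ≤ τ →
      ∀ j : Fin (2 * m + 2), 0 ≤ τ * (1 + ε * (-1 : ℝ) ^ (j : ℕ)) / (2 * m + 2) := by
    intro τ hτ j
    apply div_nonneg _ (by positivity)
    apply mul_nonneg hτ
    rcases Nat.even_or_odd (j : ℕ) with he | he <;>
      rw [he.neg_one_pow] <;> rcases hε with h | h <;> rw [h] <;> norm_num
  have hs' := idft_perturb m t₁ ε σ₁ σs hσs
  have hc' := idft_perturb m t₂ ε σ₂ σc hσc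
  have P1 : ∀ j, NN (idftRow (2 * m + 2) σs j) := fun j => by
    rw [hs' j]; exact NN_add_real (hS j) (hcnn t₁ ht1 j)
  have P2 : ∀ j, NN (idftRow (2 * m + 2) σs j + idftRow (2 * m + 2) σc j) := by
    intro j
    have he : idftRow (2 * m + 2) σs j + idftRow (2 * m + 2) σc j
        = (idftRow (2 * m + 2) σ₁ j + idftRow (2 * m + 2) σ₂ j)
          + (((t₁ + t₂) * (1 + ε * (-1 : ℝ) ^ (j : ℕ)) / (2 * m + 2) : ℝ) : ℂ) := by
      rw [hs' j, hc' j]; push_cast; ring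
    rw [he]; exact NN_add_real (hSpC j) (hcnn _ ht12 j)
  have P3 : ∀ j, NN (idftRow (2 * m + 2) σs j - idftRow (2 * m + 2) σc j) := by
    intro j
    have he : idftRow (2 * m + 2) σs j - idftRow (2 * m + 2) σc j
        = (idftRow (2 * m + 2) σ₁ j - idftRow (2 * m + 2) σ₂ j)
          + (((t₁ - t₂) * (1 + ε * (-1 : ℝ) ^ (j : ℕ)) / (2 * m + 2) : ℝ) : ℂ) := by
      rw [hs' j, hc' j]; push_cast; ring
    rw [he]; exact NN_add_real (hSmC j) (hcnn _ ht12' j)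
  have hchar : ∀ σ' : Fin (2 * m + 2) → ℂ,
      (circ (idftRow (2 * m + 2) σ')).charpoly.roots = Finset.univ.val.map σ' := by
    intro σ'
    rw [charpoly_similar _ (Matrix.diagonal σ') (Fm (2 * m + 2)) (det_F_ne hn0) (circ_mul_F σ'),
      Stmt18Aux.charpoly_diagonal, Stmt18Aux.roots_prod]
  have P6 : ∀ u v, NN (M u v) := by
    rintro ⟨i, p⟩ ⟨j, q⟩
    rw [hM]
    by_cases hpq : p = q
    · rw [if_pos hpq]; exact NN_half (P2 (j - i))
    · rw [if_neg hpq]; exact NN_half (P3 (j - i))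
  have P7 : ∀ u : Fin (2 * m + 2) × Fin 2, ∃ π : Equiv.Perm (Fin (2 * m + 2) × Fin 2),
      ∀ v, M u v = M (⟨0, by omega⟩, 0) (π v) := by
    rintro ⟨i, p⟩
    refine ⟨Equiv.prodCongr (Equiv.subRight i) (Equiv.addRight p), ?_⟩
    rintro ⟨j, q⟩
    have h0 : (⟨0, by omega⟩ : Fin (2 * m + 2)) = 0 := Fin.ext (by simp)
    have hπ : (Equiv.prodCongr (Equiv.subRight i) (Equiv.addRight p)) (j, q) = (j - i, q + p) := rfl
    rw [hπ, hM, h0, hM]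
    have hcond : (p = q) ↔ ((0 : Fin 2) = q + p) := by fin_cases p <;> fin_cases q <;> decide
    have hcs : ∀ σ' : Fin (2 * m + 2) → ℂ,
        circ (idftRow (2 * m + 2) σ') 0 (j - i) = circ (idftRow (2 * m + 2) σ') i j := by
      intro σ'
      show idftRow (2 * m + 2) σ' ((j - i) - 0) = idftRow (2 * m + 2) σ' (j - i)
      rw [sub_zero]
    rw [hcs σs, hcs σc]
    by_cases hpq : p = q
    · rw [if_pos hpq, if_pos (hcond.mp hpq)]
    · rw [if_neg hpq, if_neg (fun hh => hpq (hcond.mpr hh))]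
  have P8 : M.charpoly.roots = Finset.univ.val.map σs + Finset.univ.val.map σc := by
    set J : Matrix (Fin 2) (Fin 2) ℂ := !![1,1;1,1] with hJ
    set H : Matrix (Fin 2) (Fin 2) ℂ := !![1,-1;-1,1] with hH
    set U : Matrix (Fin 2) (Fin 2) ℂ := !![1,1;1,-1] with hU
    set E0 : Matrix (Fin 2) (Fin 2) ℂ := !![1,0;0,0] with hE0
    set E1 : Matrix (Fin 2) (Fin 2) ℂ := !![0,0;0,1] with hE1
    set D := Matrix.diagonal (fun x : Fin (2 * m + 2) × Fin 2 =>
      if x.2 = 0 then σs x.1 else σc x.1) with hD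
    have hMeq : M = (1/2 : ℂ) • (circ (idftRow (2 * m + 2) σs) ⊗ₖ J
        + circ (idftRow (2 * m + 2) σc) ⊗ₖ H) := by
      refine Matrix.ext ?_
      rintro ⟨i, p⟩ ⟨j, q⟩
      rw [hM]
      fin_cases p <;> fin_cases q <;>
        simp [hJ, hH, Matrix.kroneckerMap_apply, Matrix.smul_apply] <;> ring
    have hDeq : D = Matrix.diagonal σs ⊗ₖ E0 + Matrix.diagonal σc ⊗ₖ E1 := by
      refine Matrix.ext ?_
      rintro ⟨k, q⟩ ⟨k', q'⟩
      fin_cases q <;> fin_cases q' <;> by_cases hk : k = k' <;>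
        simp [hD, hE0, hE1, Matrix.diagonal_apply, Prod.ext_iff, hk,
          Matrix.kroneckerMap_apply]
    have hJU : (1/2 : ℂ) • (J * U) = U * E0 := by
      ext a b
      fin_cases a <;> fin_cases b <;>
        simp [hJ, hU, hE0, Matrix.mul_apply, Fin.sum_univ_two] <;> norm_num
    have hHU : (1/2 : ℂ) • (H * U) = U * E1 := by
      ext a b
      fin_cases a <;> fin_cases b <;>
        simp [hH, hU, hE1, Matrix.mul_apply, Fin.sum_univ_two] <;> norm_num
    have hMP : M * (Fm (2 * m + 2) ⊗ₖ U) = (Fm (2 * m + 2) ⊗ₖ U) * D := by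
      rw [hMeq, hDeq, Matrix.smul_mul, add_mul, ← Matrix.mul_kronecker_mul,
        ← Matrix.mul_kronecker_mul, circ_mul_F, circ_mul_F, smul_add,
        ← Matrix.kronecker_smul, ← Matrix.kronecker_smul, hJU, hHU,
        Matrix.mul_kronecker_mul, Matrix.mul_kronecker_mul, mul_add]
    have hdet : (Fm (2 * m + 2) ⊗ₖ U).det ≠ 0 := by
      rw [Matrix.det_kronecker]
      have hUdet : U.det = -2 := by rw [hU, Matrix.det_fin_two_of]; norm_num
      rw [hUdet]
      exact mul_ne_zero (pow_ne_zero _ (det_F_ne hn0)) (pow_ne_zero _ (by norm_num))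
    rw [charpoly_similar M D _ hdet hMP, Stmt18Aux.charpoly_diagonal, Fintype.prod_prod_type]
    have hsplit : ∀ k : Fin (2 * m + 2),
        (∏ q : Fin 2, (Polynomial.X - Polynomial.C (if ((k, q) : Fin (2 * m + 2) × Fin 2).2 = 0
          then σs (k, q).1 else σc (k, q).1)))
        = (Polynomial.X - Polynomial.C (σs k)) * (Polynomial.X - Polynomial.C (σc k)) := by
      intro k
      rw [Fin.prod_univ_two]
      norm_num
    rw [Finset.prod_congr rfl (fun k _ => hsplit k), Finset.prod_mul_distrib]
    have hne1 : (∏ k : Fin (2 * m + 2), (Polynomial.X - Polynomial.C (σs k))) ≠ 0 :=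
      (monic_prod_of_monic _ _ (fun _ _ => monic_X_sub_C _)).ne_zero
    have hne2 : (∏ k : Fin (2 * m + 2), (Polynomial.X - Polynomial.C (σc k))) ≠ 0 :=
      (monic_prod_of_monic _ _ (fun _ _ => monic_X_sub_C _)).ne_zero
    rw [Polynomial.roots_mul (mul_ne_zero hne1 hne2), Stmt18Aux.roots_prod,
      Stmt18Aux.roots_prod]
  exact ⟨P1, P2, P3, hchar σs, hchar σc, P6, P7, P8⟩
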